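/- Let G be a DAG in which A and C are adjacent, C and B are adjacent, but A and B are non-adjacent. Then A and B are d-connected given every subset of Pa(A)\{B} containing C and every subset of Pa(B)\{A} containing C if and only if A → C ← B (i.e., C is a child of both A and B). -/
import Mathlib


variable {V : Type*}

/-- `x` and `y` are adjacent in the directed graph with edge relation `E`. -/
def GraphAdj (E : V → V → Prop) (x y : V) : Prop := E x y ∨ E y x

/-- The set of parents of `x`. -/
def Parents (E : V → V → Prop) (x : V) : Set V := {p | E p x}

/-- The edge relation `E` is acyclic (no directed cycles, including self-loops). -/
def IsAcyclicRel (E : V → V → Prop) : Prop := ∀ v, ¬ Relation.TransGen E v v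

/-- `A` and `B` are d-connected given `Z`: there is a path (a finite sequence of
distinct vertices joined by edges in either direction) from `A` to `B` such that
every collider on the path is in `Z` or has a descendant in `Z`, and no
non-collider on the path is in `Z`. -/
def DConnected (E : V → V → Prop) (Z : Set V) (A B : V) : Prop :=
  ∃ (n : ℕ) (p : ℕ → V), 0 < n ∧ p 0 = A ∧ p n = B ∧
    (∀ i j, i ≤ n → j ≤ n → p i = p j → i = j) ∧
    (∀ i < n, E (p i) (p (i + 1)) ∨ E (p (i + 1)) (p i)) ∧
    (∀ i, 0 < i → i < n →
      ((E (p (i - 1)) (p i) ∧ E (p (i + 1)) (p i)) →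
        ∃ d, Relation.ReflTransGen E (p i) d ∧ d ∈ Z) ∧
      (¬(E (p (i - 1)) (p i) ∧ E (p (i + 1)) (p i)) → p i ∉ Z))

/-- `A` and `B` are d-separated given `Z`. -/
def DSeparated (E : V → V → Prop) (Z : Set V) (A B : V) : Prop :=
  ¬ DConnected E Z A B

private lemma dconn_symm {E : V → V → Prop} {Z : Set V} {A B : V}
    (h : DConnected E Z A B) : DConnected E Z B A := by
  obtain ⟨n, p, hn, h0, hN, hinj, hedge, hcol⟩ := h
  refine ⟨n, fun i => p (n - i), hn, ?_, ?_, ?_, ?_, ?_⟩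
  · simpa using hN
  · simpa using h0
  · intro i j hi hj hij
    have := hinj (n - i) (n - j) (by omega) (by omega) hij
    omega
  · intro i hi
    have h1 := hedge (n - i - 1) (by omega)
    have e1 : n - i - 1 + 1 = n - i := by omega
    rw [e1] at h1
    show E (p (n - i)) (p (n - (i + 1))) ∨ E (p (n - (i + 1))) (p (n - i))
    have e2 : n - (i + 1) = n - i - 1 := by omega
    rw [e2]
    tauto
  · intro i hi1 hi2
    have hc := hcol (n - i) (by omega) (by omega)
    have e1 : n - i - 1 = n - (i + 1) := by omega
    have e2 : n - i + 1 = n - (i - 1) := by omega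
    rw [e1, e2] at hc
    show (E (p (n - (i - 1))) (p (n - i)) ∧ E (p (n - (i + 1))) (p (n - i)) →
        ∃ d, Relation.ReflTransGen E (p (n - i)) d ∧ d ∈ Z) ∧
      (¬(E (p (n - (i - 1))) (p (n - i)) ∧ E (p (n - (i + 1))) (p (n - i))) →
        p (n - i) ∉ Z)
    constructor
    · intro ⟨ha, hb⟩
      exact hc.1 ⟨hb, ha⟩
    · intro hnc
      exact hc.2 (fun ⟨ha, hb⟩ => hnc ⟨hb, ha⟩)

private lemma sep_parents {E : V → V → Prop} (hacy : IsAcyclicRel E) {A B : V}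
    (hAB : ¬ GraphAdj E A B) (hdesc : ¬ Relation.TransGen E A B) :
    DSeparated E (Parents E A) A B := by
  rintro ⟨n, p, hn, h0, hN, hinj, hedge, hcol⟩
  have hn2 : 2 ≤ n := by
    by_contra h
    have hn1 : n = 1 := by omega
    subst hn1
    have := hedge 0 one_pos
    rw [h0, hN] at this
    exact hAB this
  have h01 : E (p 0) (p 1) := by
    rcases hedge 0 hn with h | h
    · exact h
    · exfalso
      have hc := hcol 1 one_pos (by omega)
      by_cases hcl : E (p 0) (p 1) ∧ E (p 2) (p 1)
      · exact hacy (p 0) (Relation.TransGen.head hcl.1 (.single h))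
      · have hm : p 1 ∈ Parents E A := by
          show E (p 1) A
          rw [← h0]; exact h
        exact hc.2 hcl hm
  have hfwdchain : ∀ i, i ≤ n → (∀ j < i, E (p j) (p (j + 1))) →
      Relation.ReflTransGen E A (p i) := by
    intro i
    induction i with
    | zero =>
      intro _ _
      rw [h0]
    | succ k ih =>
      intro hk hfwd
      exact (ih (by omega) (fun j hj => hfwd j (by omega))).tail (hfwd k (by omega))
  by_cases hall : ∀ i < n, E (p i) (p (i + 1))
  · apply hdesc
    have h1 := hfwdchain (n - 1) (by omega) (fun j hj => hall j (by omega))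
    have h2 := hall (n - 1) (by omega)
    rw [Nat.sub_add_cancel (by omega), hN] at h2
    exact Relation.TransGen.tail' h1 h2
  · push_neg at hall
    classical
    have hex : ∃ i, i < n ∧ ¬ E (p i) (p (i + 1)) := by
      obtain ⟨i, h1, h2⟩ := hall
      exact ⟨i, h1, h2⟩
    set i := Nat.find hex with hidef
    obtain ⟨hilt, hinE⟩ := Nat.find_spec hex
    rw [← hidef] at hilt hinE
    have hmin : ∀ j < i, E (p j) (p (j + 1)) := by
      intro j hj
      have := Nat.find_min hex hj
      push_neg at this
      exact this (by omega)
    have hi0 : 0 < i := by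
      by_contra h
      have hi00 : i = 0 := by omega
      rw [hi00] at hinE
      exact hinE h01
    have hcolli := hcol i hi0 hilt
    have hleft : E (p (i - 1)) (p i) := by
      have := hmin (i - 1) (by omega)
      rwa [Nat.sub_add_cancel (by omega)] at this
    have hright : E (p (i + 1)) (p i) := (hedge i hilt).resolve_left hinE
    obtain ⟨d, hd1, hd2⟩ := hcolli.1 ⟨hleft, hright⟩
    have hAi : Relation.ReflTransGen E A (p i) := hfwdchain i (by omega) hmin
    exact hacy A (Relation.TransGen.tail' (hAi.trans hd1) hd2)

/-- For adjacent pairs `A,C` and `C,B` with `A,B` non-adjacent: `A` and `B` are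
d-connected given every subset of `Pa(A)\{B}` containing `C` and every subset of
`Pa(B)\{A}` containing `C` iff `A → C ← B`. -/
theorem dconnected_parent_subsets_containing_iff_collider [Finite V]
    (E : V → V → Prop) (hacy : IsAcyclicRel E) (A B C : V)
    (hAC : GraphAdj E A C) (hCB : GraphAdj E C B) (hAB : ¬ GraphAdj E A B)
    (hABne : A ≠ B) :
    ((∀ Z : Set V, Z ⊆ Parents E A \ {B} → C ∈ Z → DConnected E Z A B) ∧
     (∀ Z : Set V, Z ⊆ Parents E B \ {A} → C ∈ Z → DConnected E Z A B)) ↔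
      (E A C ∧ E B C) := by
  have hCneA : C ≠ A := by
    rintro rfl
    rcases hAC with h | h <;> exact hacy C (.single h)
  have hCneB : C ≠ B := by
    rintro rfl
    rcases hCB with h | h <;> exact hacy C (.single h)
  have hBA : ¬ GraphAdj E B A := fun h => hAB (h.elim .inr .inl)
  have hPA : Parents E A \ {B} = Parents E A := by
    ext x
    simp only [Set.mem_diff, Set.mem_singleton_iff, and_iff_left_iff_imp]
    rintro hx rfl
    exact hAB (Or.inr hx)
  have hPB : Parents E B \ {A} = Parents E B := by
    ext x
    simp only [Set.mem_diff, Set.mem_singleton_iff, and_iff_left_iff_imp]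
    rintro hx rfl
    exact hAB (Or.inl hx)
  constructor
  · rintro ⟨h1, h2⟩
    by_cases hd : Relation.TransGen E A B
    · have hd' : ¬ Relation.TransGen E B A := fun h => hacy A (hd.trans h)
      have hBC : E B C := by
        by_contra hBC
        have hCB' : E C B := hCB.resolve_right hBC
        have hc := h2 (Parents E B \ {A}) subset_rfl ⟨hCB', by simpa using hCneA⟩
        rw [hPB] at hc
        exact sep_parents hacy hBA hd' (dconn_symm hc)
      refine ⟨?_, hBC⟩
      by_contra h
      have hCA' : E C A := hAC.resolve_left h
      exact hacy A ((hd.tail hBC).tail hCA')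
    · have hACe : E A C := by
        by_contra h
        have hCA' : E C A := hAC.resolve_left h
        have hc := h1 (Parents E A \ {B}) subset_rfl ⟨hCA', by simpa using hCneB⟩
        rw [hPA] at hc
        exact sep_parents hacy hAB hd hc
      refine ⟨hACe, ?_⟩
      by_contra h
      have hCB' : E C B := hCB.resolve_right h
      exact hd (Relation.TransGen.head hACe (.single hCB'))
  · rintro ⟨hA, hB⟩
    have hACne : A ≠ C := fun h => hCneA h.symm
    have key : ∀ Z : Set V, C ∈ Z → DConnected E Z A B := by
      intro Z hC
      refine ⟨2, fun i => if i = 0 then A else if i = 1 then C else B, two_pos,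
        by norm_num, by norm_num, ?_, ?_, ?_⟩
      · intro i j hi hj hij
        interval_cases i <;> interval_cases j <;> simp_all
      · intro i hi
        interval_cases i
        · simpa using Or.inl hA
        · simpa using Or.inr hB
      · intro i hi1 hi2
        have hi : i = 1 := by omega
        subst hi
        norm_num
        constructor
        · intro _ _
          exact ⟨C, Relation.ReflTransGen.refl, hC⟩
        · intro hnc
          exact absurd hB (hnc hA)
    exact ⟨fun Z _ hC => key Z hC, fun Z _ hC => key Z hC⟩
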